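/- Assume Hypothesis (1). Let V be a left E-submodule of the left regular module E; equivalently, identifying E with End_A(Y) as sets, V is an F-subspace of End_A(Y) such that v ∘ e ∈ V for all v ∈ V and e ∈ End_A(Y). Let V·Y := ∑_{f ∈ V} f(Y), an A-submodule of Y. Then {g ∈ End_A(Y) : g(Y) ⊆ V·Y} = V; equivalently, the image of the natural inclusion Hom_A(Y, V·Y) → Hom_A(Y, Y) = E equals V. -/
import Mathlib


/-- under Hypothesis (1) (`lam`/`hlam` below), for an `E`-submodule `V` of
`E = End_A(Y)^op` (an `F`-subspace of `End_A(Y)` closed under precomposition), one has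
`{g : g(Y) ⊆ V·Y} = V`, where `V·Y = ∑_{f ∈ V} f(Y)`. -/
theorem green_lemma_VY
    (F : Type*) [Field F] (A : Type*) [Ring A] [Algebra F A] [FiniteDimensional F A]
    (Y : Type*) [AddCommGroup Y] [Module F Y] [Module A Y]
    [IsScalarTower F A Y] [SMulCommClass A F Y] [Module.Finite A Y]
    (lam : (Y →ₗ[A] Y) →ₗ[F] F)
    (hlam : ∀ x : Y →ₗ[A] Y, x ≠ 0 →
      (∃ e : Y →ₗ[A] Y, lam (x ∘ₗ e) ≠ 0) ∧ (∃ e : Y →ₗ[A] Y, lam (e ∘ₗ x) ≠ 0))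
    (V : Submodule F (Y →ₗ[A] Y))
    (hV : ∀ v ∈ V, ∀ e : Y →ₗ[A] Y, v ∘ₗ e ∈ V) :
    ∀ g : Y →ₗ[A] Y,
      (LinearMap.range g ≤ ⨆ f ∈ V, LinearMap.range f) ↔ g ∈ V := by
  classical
  haveI : Module.Finite F Y := Module.Finite.trans A Y
  haveI : FiniteDimensional F (Y →ₗ[A] Y) :=
    FiniteDimensional.of_injective (LinearMap.restrictScalarsₗ F A Y Y F)
      (LinearMap.restrictScalars_injective F)
  -- the bilinear form B x y = lam (x ∘ y)
  have comp_smul : ∀ (x y : Y →ₗ[A] Y) (c : F), x ∘ₗ (c • y) = c • (x ∘ₗ y) := by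
    intro x y c
    ext z
    simp [LinearMap.map_smul_of_tower]
  let B : (Y →ₗ[A] Y) →ₗ[F] (Y →ₗ[A] Y) →ₗ[F] F :=
    LinearMap.mk₂ F (fun x y => lam (x ∘ₗ y))
      (by intro x x' y
          show lam ((x + x') ∘ₗ y) = lam (x ∘ₗ y) + lam (x' ∘ₗ y)
          rw [LinearMap.add_comp, map_add])
      (by intro c x y
          show lam ((c • x) ∘ₗ y) = c • lam (x ∘ₗ y)
          rw [LinearMap.smul_comp, map_smul])
      (by intro x y y'
          show lam (x ∘ₗ (y + y')) = lam (x ∘ₗ y) + lam (x ∘ₗ y')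
          rw [LinearMap.comp_add, map_add])
      (by intro c x y
          show lam (x ∘ₗ (c • y)) = c • lam (x ∘ₗ y)
          rw [comp_smul, map_smul])
  have hBinj : Function.Injective B := by
    rw [injective_iff_map_eq_zero]
    intro x hx
    by_contra hx0
    obtain ⟨⟨e, he⟩, -⟩ := hlam x hx0
    exact he (by simpa [B] using congrArg (fun f => f e) hx)
  have hBsurj : Function.Surjective B :=
    (LinearMap.injective_iff_surjective_of_finrank_eq_finrank
      (by rw [Subspace.dual_finrank_eq])).mp hBinj
  intro g
  constructor
  · intro hrange
    by_contra hg
    have hq : (Submodule.Quotient.mk g : (Y →ₗ[A] Y) ⧸ V) ≠ 0 := by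
      simpa [Submodule.Quotient.mk_eq_zero] using hg
    have hq' : ¬ ∀ f : Module.Dual F ((Y →ₗ[A] Y) ⧸ V),
        f (Submodule.Quotient.mk g) = 0 := by
      rw [Module.forall_dual_apply_eq_zero_iff F]; exact hq
    push_neg at hq'
    obtain ⟨f, hf⟩ := hq'
    obtain ⟨x, hx⟩ := hBsurj (f ∘ₗ V.mkQ)
    have hxv : ∀ v ∈ V, lam (x ∘ₗ v) = 0 := by
      intro v hv
      have h1 : B x v = (f ∘ₗ V.mkQ) v := by rw [hx]
      have h2 : (f ∘ₗ V.mkQ) v = 0 := by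
        simp [Submodule.mkQ_apply, (Submodule.Quotient.mk_eq_zero V).mpr hv]
      simpa [B, h2] using h1
    have hxg : lam (x ∘ₗ g) ≠ 0 := by
      have h1 : B x g = (f ∘ₗ V.mkQ) g := by rw [hx]
      have h2 : (f ∘ₗ V.mkQ) g = f (Submodule.Quotient.mk g) := rfl
      simpa [B, h2] using h1 ▸ (h2 ▸ hf)
    have hker : ∀ v ∈ V, x ∘ₗ v = 0 := by
      intro v hv
      by_contra h
      obtain ⟨⟨e, he⟩, -⟩ := hlam _ h
      apply he
      have := hxv (v ∘ₗ e) (hV v hv e)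
      rwa [← LinearMap.comp_assoc] at this
    have hsup : (⨆ f ∈ V, LinearMap.range f) ≤ LinearMap.ker x := by
      refine iSup₂_le fun v hv => ?_
      rw [LinearMap.range_le_ker_iff]
      exact hker v hv
    have : x ∘ₗ g = 0 := by
      rw [← LinearMap.range_le_ker_iff]
      exact hrange.trans hsup
    exact hxg (by rw [this, map_zero])
  · intro hg
    exact le_iSup₂ (f := fun f (_ : f ∈ V) => LinearMap.range f) g hg
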